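/- With V(a,k) as above (l odd, ε a primitive 2l-th root of unity, a^{4l} ≠ 1), the coefficient ([a²; k+i]·[i]) = ((a²ε^{k+i} - a⁻²ε^{-k-i})/(ε-ε⁻¹))·((ε^i - ε^{-i})/(ε-ε⁻¹)) is nonzero for all 1 ≤ i ≤ l-1. Consequently the module V(a,k) is simple: any nonzero submodule (i.e. subspace invariant under E, F, and all P_j) equals all of ℂ^l. -/
import Mathlib


/-- For `V(a,k)` with `l` odd, `ε` a primitive `2l`-th root of unity and `a^{4l} ≠ 1`,
the coefficient `[a²; k+i]·[i]` of the `E`-action is nonzero for `1 ≤ i ≤ l-1`, and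
consequently `V(a,k)` is simple: every nonzero subspace invariant under `E`, `F`
and all `P_j` is the whole space. -/
theorem stmt4 (l : ℕ) (hl0 : 0 < l) (hl : Odd l) (ε a : ℂ)
    (hε : IsPrimitiveRoot ε (2 * l)) (ha : a ≠ 0) (hag : a ^ (4 * l) ≠ 1) (k : ℤ) :
    let qbin : ℤ → ℂ := fun n => (a ^ 2 * ε ^ n - (a ^ 2)⁻¹ * ε ^ (-n)) / (ε - ε⁻¹)
    let qint : ℤ → ℂ := fun n => (ε ^ n - ε ^ (-n)) / (ε - ε⁻¹)
    let Pm : ℤ → Matrix (Fin l) (Fin l) ℂ := fun j =>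
      Matrix.diagonal fun i => if j = k - 2 * (i : ℤ) then 1 else 0
    let Fm : Matrix (Fin l) (Fin l) ℂ :=
      Matrix.of fun r c => if (r : ℕ) = (c : ℕ) + 1 then 1 else 0
    let Em : Matrix (Fin l) (Fin l) ℂ :=
      Matrix.of fun r c =>
        if (c : ℕ) = (r : ℕ) + 1 then qbin (k + (c : ℕ)) * qint ((c : ℕ) : ℤ) else 0
    (∀ i : ℕ, 1 ≤ i → i ≤ l - 1 → qbin (k + (i : ℤ)) * qint (i : ℤ) ≠ 0) ∧
      ∀ W : Submodule ℂ (Fin l → ℂ),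
        (∀ v ∈ W, Em.mulVec v ∈ W) →
        (∀ v ∈ W, Fm.mulVec v ∈ W) →
        (∀ j : ℤ, ∀ v ∈ W, (Pm j).mulVec v ∈ W) →
        W ≠ ⊥ → W = ⊤ := by
  intro qbin qint Pm Fm Em
  have hεne : ε ≠ 0 := hε.ne_zero (by omega)
  have ha2 : a ^ 2 ≠ 0 := pow_ne_zero 2 ha
  have key : ∀ i : ℕ, 1 ≤ i → i ≤ l - 1 → qbin (k + (i : ℤ)) * qint (i : ℤ) ≠ 0 := by
    intro i hi1 hi2
    have hl2 : 2 ≤ l := by omega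
    have hden : ε - ε⁻¹ ≠ 0 := by
      intro h
      have h' : ε = ε⁻¹ := by linear_combination h
      have h2 : ε ^ 2 = 1 := by
        calc ε ^ 2 = ε * ε := sq ε
        _ = ε * ε⁻¹ := by nth_rewrite 2 [h']; rfl
        _ = 1 := mul_inv_cancel₀ hεne
      have hd := (hε.pow_eq_one_iff_dvd 2).mp h2
      have := Nat.le_of_dvd (by norm_num) hd
      omega
    have hqint : qint (i : ℤ) ≠ 0 := by
      refine div_ne_zero ?_ hden
      intro h
      have h' : ε ^ (i : ℤ) = ε ^ (-(i : ℤ)) := by linear_combination h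
      have h1 : ε ^ (2 * (i : ℤ)) = 1 := by
        calc ε ^ (2 * (i : ℤ)) = ε ^ (i : ℤ) * ε ^ (i : ℤ) := by
              rw [two_mul, zpow_add₀ hεne]
        _ = ε ^ (i : ℤ) * ε ^ (-(i : ℤ)) := by rw [h']
        _ = 1 := by rw [← zpow_add₀ hεne, add_neg_cancel, zpow_zero]
      have hd := (hε.zpow_eq_one_iff_dvd _).mp h1
      have hd2 : (2 : ℤ) * (l : ℤ) ∣ 2 * (i : ℤ) := by exact_mod_cast hd
      have hd3 : (l : ℤ) ∣ (i : ℤ) :=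
        (mul_dvd_mul_iff_left (by norm_num : (2 : ℤ) ≠ 0)).mp hd2
      have hd4 : l ∣ i := Int.natCast_dvd_natCast.mp hd3
      have := Nat.le_of_dvd (by omega) hd4
      omega
    have hqbin : qbin (k + (i : ℤ)) ≠ 0 := by
      refine div_ne_zero ?_ hden
      intro h
      set n : ℤ := k + (i : ℤ) with hn
      have h' : a ^ 2 * ε ^ n = (a ^ 2)⁻¹ * ε ^ (-n) := by linear_combination h
      have h4 : a ^ 4 * ε ^ (2 * n) = 1 := by
        have e1 : a ^ 4 * ε ^ (2 * n) = (a ^ 2 * ε ^ n) * (a ^ 2 * ε ^ n) := by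
          rw [two_mul, zpow_add₀ hεne]; ring
        rw [e1]
        nth_rewrite 2 [h']
        rw [show a ^ 2 * ε ^ n * ((a ^ 2)⁻¹ * ε ^ (-n))
              = (a ^ 2 * (a ^ 2)⁻¹) * (ε ^ n * ε ^ (-n)) from by ring,
          mul_inv_cancel₀ ha2, ← zpow_add₀ hεne, add_neg_cancel, zpow_zero, mul_one]
      have h5 : (a ^ 4 * ε ^ (2 * n)) ^ l = 1 := by rw [h4, one_pow]
      have h7 : (ε ^ (2 * n)) ^ l = 1 := by
        rw [← zpow_natCast (ε ^ (2 * n)), ← zpow_mul,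
          show 2 * n * (l : ℤ) = ((2 * l : ℕ) : ℤ) * n from by push_cast; ring,
          zpow_mul, zpow_natCast, hε.pow_eq_one, one_zpow]
      rw [mul_pow, ← pow_mul, h7, mul_one] at h5
      exact hag h5
    exact mul_ne_zero hqbin hqint
  refine ⟨key, ?_⟩
  intro W hEW hFW hPW hWne
  obtain ⟨w, hwW, hw0⟩ := (Submodule.ne_bot_iff W).mp hWne
  obtain ⟨i0, hi0⟩ : ∃ i, w i ≠ 0 := by
    by_contra h; push_neg at h; exact hw0 (funext fun i => h i)
  -- the projection gives a standard basis vector in W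
  have hP : (Pm (k - 2 * (i0 : ℤ))).mulVec w = Pi.single i0 (w i0) := by
    funext r
    simp only [Pm, Matrix.mulVec_diagonal]
    rw [Pi.single_apply]
    by_cases h : r = i0
    · subst h; simp
    · have hne : ¬(k - 2 * (i0 : ℤ) = k - 2 * (r : ℤ)) := by
        intro he
        have : (i0 : ℤ) = (r : ℤ) := by omega
        exact h (Fin.ext (by exact_mod_cast this)).symm
      simp [hne, h]
  have h1 : Pi.single i0 (1 : ℂ) ∈ W := by
    have e1 := hPW (k - 2 * (i0 : ℤ)) w hwW
    rw [hP] at e1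
    have e2 := W.smul_mem (w i0)⁻¹ e1
    rwa [← Pi.single_smul, smul_eq_mul, inv_mul_cancel₀ hi0] at e2
  -- F moves basis vectors up
  have hFstep : ∀ (c : Fin l) (h : (c : ℕ) + 1 < l), Pi.single c (1 : ℂ) ∈ W →
      Pi.single (⟨(c : ℕ) + 1, h⟩ : Fin l) (1 : ℂ) ∈ W := by
    intro c h hc
    have hmem := hFW _ hc
    have hcomp : Fm.mulVec (Pi.single c 1) = Pi.single (⟨(c : ℕ) + 1, h⟩ : Fin l) (1 : ℂ) := by
      funext r
      simp only [Fm, Matrix.mulVec, dotProduct, Matrix.of_apply, Pi.single_apply]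
      rw [Finset.sum_eq_single c (fun b _ hb => by simp [hb]) (by simp)]
      simp [Fin.ext_iff]
    rwa [hcomp] at hmem
  -- E moves basis vectors down
  have hEstep : ∀ (c : Fin l), 1 ≤ (c : ℕ) → Pi.single c (1 : ℂ) ∈ W →
      Pi.single (⟨(c : ℕ) - 1, by omega⟩ : Fin l) (1 : ℂ) ∈ W := by
    intro c h1c hc
    have hcl : (c : ℕ) < l := c.isLt
    have hcone : qbin (k + ((c : ℕ) : ℤ)) * qint (((c : ℕ)) : ℤ) ≠ 0 :=
      key (c : ℕ) h1c (by omega)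
    have hmem := hEW _ hc
    have hcomp : Em.mulVec (Pi.single c 1) =
        Pi.single (⟨(c : ℕ) - 1, by omega⟩ : Fin l)
          (qbin (k + ((c : ℕ) : ℤ)) * qint (((c : ℕ)) : ℤ)) := by
      funext r
      simp only [Em, Matrix.mulVec, dotProduct, Matrix.of_apply, Pi.single_apply]
      rw [Finset.sum_eq_single c (fun b _ hb => by simp [hb]) (by simp)]
      have hiff : ((c : ℕ) = (r : ℕ) + 1) ↔ ((r : ℕ) = (c : ℕ) - 1) := by omega
      simp [Fin.ext_iff, hiff]
    rw [hcomp] at hmem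
    have e2 := W.smul_mem (qbin (k + ((c : ℕ) : ℤ)) * qint (((c : ℕ)) : ℤ))⁻¹ hmem
    rwa [← Pi.single_smul, smul_eq_mul, inv_mul_cancel₀ hcone] at e2
  -- climb up from i0 to any m ≥ i0
  have hup : ∀ m : ℕ, (hm : m < l) → (i0 : ℕ) ≤ m →
      Pi.single (⟨m, hm⟩ : Fin l) (1 : ℂ) ∈ W := by
    intro m
    induction m with
    | zero =>
      intro hm h0
      have hi : i0 = (⟨0, hm⟩ : Fin l) := Fin.ext (by simp; omega)
      rwa [← hi]
    | succ n ih =>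
      intro hm hle
      by_cases hc : (i0 : ℕ) = n + 1
      · have hi : i0 = (⟨n + 1, hm⟩ : Fin l) := Fin.ext (by simp; omega)
        rwa [← hi]
      · have hprev := ih (by omega) (by omega)
        exact hFstep ⟨n, by omega⟩ hm hprev
  -- climb down from l-1
  have hdown : ∀ m : ℕ, m < l →
      Pi.single (⟨l - 1 - m, by omega⟩ : Fin l) (1 : ℂ) ∈ W := by
    intro m
    induction m with
    | zero => exact fun _ => hup (l - 1) (by omega) (by omega)
    | succ n ih =>
      intro hm
      have hprev := ih (by omega)
      exact hEstep ⟨l - 1 - n, by omega⟩ (by simp; omega) hprev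
  have hall : ∀ j : Fin l, Pi.single j (1 : ℂ) ∈ W := by
    intro j
    have h2 := hdown (l - 1 - (j : ℕ)) (by omega)
    have heq : (⟨l - 1 - (l - 1 - (j : ℕ)), by omega⟩ : Fin l) = j := by
      apply Fin.ext
      have := j.isLt
      simp only []
      omega
    rwa [heq] at h2
  rw [Submodule.eq_top_iff']
  intro x
  have hx : x = ∑ j : Fin l, x j • (Pi.single j 1 : Fin l → ℂ) := by
    funext r
    simp [Pi.single_apply]
  rw [hx]
  exact Submodule.sum_mem _ fun j _ => W.smul_mem _ (hall j)
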